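/- For 0 ≤ x ≤ p ≤ 1/2, the binary relative entropy satisfies I_p(p - x) ≥ I_p(p + x). -/

import Mathlib

/-- Binary relative entropy `I_p(y) = y log(y/p) + (1-y) log((1-y)/(1-p))`
(Mathlib's `Real.log 0 = 0` gives the convention `0 · log 0 = 0`). -/
noncomputable def binEnt (p y : ℝ) : ℝ :=
  y * Real.log (y / p) + (1 - y) * Real.log ((1 - y) / (1 - p))

lemma binEnt_eq {p : ℝ} (hp0 : p ≠ 0) (hp1 : p ≠ 1) (y : ℝ) :
    binEnt p y = y * Real.log y + (1 - y) * Real.log (1 - y)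
      - (y * Real.log p + (1 - y) * Real.log (1 - p)) := by
  have h1p : (1:ℝ) - p ≠ 0 := sub_ne_zero.mpr (Ne.symm hp1)
  unfold binEnt
  rcases eq_or_ne y 0 with hy | hy
  · simp [hy, Real.log_div one_ne_zero h1p]
  rcases eq_or_ne y 1 with hy1 | hy1
  · simp [hy1, Real.log_div one_ne_zero hp0]
  · rw [Real.log_div hy hp0, Real.log_div (sub_ne_zero.mpr (Ne.symm hy1)) h1p]
    ring

/-- For `0 ≤ x ≤ p ≤ 1/2` one has `I_p(p - x) ≥ I_p(p + x)`. -/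
theorem stmt_1 (p x : ℝ) (hx0 : 0 ≤ x) (hxp : x ≤ p) (hp : p ≤ 1 / 2) :
    binEnt p (p + x) ≤ binEnt p (p - x) := by
  rcases eq_or_lt_of_le hx0 with h0 | h0
  · simp [← h0]
  have hp0 : 0 < p := lt_of_lt_of_le h0 hxp
  have hp1 : p < 1 := lt_of_le_of_lt hp (by norm_num)
  set G : ℝ → ℝ := fun y => y * Real.log y + (1 - y) * Real.log (1 - y)
      - (y * Real.log p + (1 - y) * Real.log (1 - p)) with hGdef
  have hbe : ∀ y, binEnt p y = G y := fun y => binEnt_eq hp0.ne' hp1.ne y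
  set F : ℝ → ℝ := fun t => G (p - t) - G (p + t) with hFdef
  -- derivative of G on (0,1)
  have hG' : ∀ y : ℝ, 0 < y → y < 1 →
      HasDerivAt G (Real.log y - Real.log (1 - y) - (Real.log p - Real.log (1 - p))) y := by
    intro y hy0 hy1
    have h1y : (0:ℝ) < 1 - y := by linarith
    have h1 := Real.hasDerivAt_mul_log hy0.ne'
    have h2 : HasDerivAt (fun z : ℝ => (1 - z) * Real.log (1 - z))
        ((Real.log (1 - y) + 1) * (-1)) y :=
      (Real.hasDerivAt_mul_log h1y.ne').comp y ((hasDerivAt_id y).const_sub 1)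
    have h3 : HasDerivAt (fun z : ℝ => z * Real.log p) (Real.log p) y :=
      hasDerivAt_mul_const _
    have h4 : HasDerivAt (fun z : ℝ => (1 - z) * Real.log (1 - p))
        ((-1) * Real.log (1 - p)) y :=
      ((hasDerivAt_id y).const_sub 1).mul_const _
    have := (h1.add h2).sub (h3.add h4)
    exact this.congr_deriv (by ring)
  -- derivative of F on (0,p)
  have hF' : ∀ t ∈ Set.Ioo (0:ℝ) p,
      HasDerivAt F
        (Real.log (1 - p + t) + Real.log (1 - p - t) - Real.log (p - t) - Real.log (p + t)
          + 2 * (Real.log p - Real.log (1 - p))) t := by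
    intro t ht
    obtain ⟨ht0, htp⟩ := ht
    have hpt0 : 0 < p - t := by linarith
    have hpt1 : p - t < 1 := by linarith
    have hqt0 : 0 < p + t := by linarith
    have hqt1 : p + t < 1 := by linarith
    have hA : HasDerivAt (fun s : ℝ => G (p - s))
        ((Real.log (p - t) - Real.log (1 - (p - t)) - (Real.log p - Real.log (1 - p))) * (-1)) t :=
      (hG' _ hpt0 hpt1).comp t ((hasDerivAt_id t).const_sub p)
    have hB : HasDerivAt (fun s : ℝ => G (p + s))
        ((Real.log (p + t) - Real.log (1 - (p + t)) - (Real.log p - Real.log (1 - p))) * 1) t :=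
      (hG' _ hqt0 hqt1).comp t ((hasDerivAt_id t).const_add p)
    have := hA.sub hB
    exact this.congr_deriv (by ring)
  -- the derivative is nonnegative
  have hD : ∀ t ∈ Set.Ioo (0:ℝ) p,
      0 ≤ Real.log (1 - p + t) + Real.log (1 - p - t) - Real.log (p - t) - Real.log (p + t)
          + 2 * (Real.log p - Real.log (1 - p)) := by
    intro t ht
    obtain ⟨ht0, htp⟩ := ht
    have hpt0 : 0 < p - t := by linarith
    have hqt0 : 0 < p + t := by linarith
    have h1p : 0 < 1 - p := by linarith
    have ha : 0 < 1 - p + t := by linarith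
    have hb : 0 < 1 - p - t := by linarith
    have key : Real.log ((p - t) * (p + t) * ((1 - p) * (1 - p)))
        ≤ Real.log ((1 - p + t) * (1 - p - t) * (p * p)) := by
      apply Real.log_le_log (by positivity)
      nlinarith [sq_nonneg t, sq_nonneg (1 - 2*p)]
    rw [Real.log_mul (mul_pos hpt0 hqt0).ne' (mul_pos h1p h1p).ne',
        Real.log_mul hpt0.ne' hqt0.ne', Real.log_mul h1p.ne' h1p.ne',
        Real.log_mul (mul_pos ha hb).ne' (mul_pos hp0 hp0).ne',
        Real.log_mul ha.ne' hb.ne', Real.log_mul hp0.ne' hp0.ne'] at key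
    linarith
  -- F is monotone on [0, p]
  have hGcont : Continuous G := by
    have h := Real.continuous_mul_log
    exact (h.add (h.comp (continuous_const.sub continuous_id))).sub (by continuity)
  have hFcont : Continuous F :=
    (hGcont.comp (continuous_const.sub continuous_id)).sub
      (hGcont.comp (continuous_const.add continuous_id))
  have hmono : MonotoneOn F (Set.Icc 0 p) := by
    apply monotoneOn_of_deriv_nonneg (convex_Icc 0 p) hFcont.continuousOn
    · intro t ht
      rw [interior_Icc] at ht
      exact ((hF' t ht).differentiableAt).differentiableWithinAt
    · intro t ht
      rw [interior_Icc] at ht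
      rw [(hF' t ht).deriv]
      exact hD t ht
  have h0mem : (0:ℝ) ∈ Set.Icc (0:ℝ) p := Set.left_mem_Icc.mpr (le_of_lt (lt_of_lt_of_le h0 hxp))
  have hxmem : x ∈ Set.Icc (0:ℝ) p := ⟨hx0, hxp⟩
  have := hmono h0mem hxmem hx0
  have hF0 : F 0 = 0 := by simp [hFdef]
  rw [hbe (p + x), hbe (p - x)]
  have : 0 ≤ F x := by linarith [hmono h0mem hxmem hx0]
  simpa [hFdef, sub_nonneg] using this
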